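/- Correctness of dynamic programming based power allocation: Assume the weights Q_1, …, Q_K are pairwise distinct, and let Ẽ = E ∩ [0, P_max] (which contains 0 and P_max, hence is nonempty) with elements listed in increasing order as π_1 < ⋯ < π_L. Then F attains its maximum over D, and max_{p ∈ D} F(p) = max over l ∈ {1, …, L} of H(l, K). -/

import Mathlib

open Finset

/-- Prefix sum `S_k(p) = p_1 + ⋯ + p_k` (0-based: sum of the first `k` coordinates). -/
noncomputable def Sfun (K : ℕ) (p : Fin K → ℝ) (k : ℕ) : ℝ :=
  ∑ j : Fin K, if (j : ℕ) < k then p j else 0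

/-- The NOMA objective `F`. -/
noncomputable def Fobj (K : ℕ) (g Q : Fin K → ℝ) (η Z : ℝ) (p : Fin K → ℝ) : ℝ :=
  (∑ k : Fin K, Q k * Real.log (1 + p k * g k / (Sfun K p (k : ℕ) * g k + η)))
    - Z * Sfun K p K

/-- The feasible set `D`. -/
def Dfeas (K : ℕ) (Pmax : ℝ) : Set (Fin K → ℝ) :=
  {p | (∀ k, 0 ≤ p k) ∧ Sfun K p K ≤ Pmax}

/-- The finite candidate set `E`. -/
def Ecand (K : ℕ) (g Q : Fin K → ℝ) (η Z Pmax : ℝ) : Set ℝ :=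
  ({0, Pmax} : Set ℝ)
    ∪ {x | ∃ i j : Fin K, i < j ∧
        x = η * (g j * Q j - g i * Q i) / (g i * g j * (Q i - Q j))}
    ∪ {x | ∃ i : Fin K, x = Q i / Z - η / g i}

/-- `f_k(s, q) = Q_k log(1 + q g_k / (s g_k + η)) − Z q`. -/
noncomputable def ff (K : ℕ) (g Q : Fin K → ℝ) (η Z : ℝ) (j : Fin K) (s q : ℝ) : ℝ :=
  Q j * Real.log (1 + q * g j / (s * g j + η)) - Z * q

/-- `G_k(p_1, …, p_k) = Σ_{j=1}^k f_j(S_{j−1}, p_j)`; note `G_K = F`. -/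
noncomputable def Gfun (K : ℕ) (g Q : Fin K → ℝ) (η Z : ℝ) (k : ℕ) (p : Fin K → ℝ) : ℝ :=
  ∑ j : Fin K, if (j : ℕ) < k then ff K g Q η Z j (Sfun K p (j : ℕ)) (p j) else 0

namespace DPPA

lemma proj_cases {a b c : ℝ} (hab : a ≤ b) :
    max a (min c b) = a ∨ max a (min c b) = b ∨ max a (min c b) = c := by
  rcases le_total c a with h | h
  · left; rw [min_eq_left (h.trans hab), max_eq_left h]
  · rcases le_total c b with h2 | h2
    · right; right; rw [min_eq_left h2, max_eq_right h]
    · right; left; rw [min_eq_right h2, max_eq_right hab]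

lemma le_of_unimodal {f f' : ℝ → ℝ} {a b c : ℝ} (hab : a ≤ b)
    (hcont : ContinuousOn f (Set.Icc a b))
    (hd : ∀ x ∈ Set.Ioo a b, HasDerivAt f (f' x) x)
    (hpos : ∀ x ∈ Set.Ioo a b, x < c → 0 ≤ f' x)
    (hneg : ∀ x ∈ Set.Ioo a b, c < x → f' x ≤ 0) :
    ∀ t ∈ Set.Icc a b, f t ≤ f (max a (min c b)) := by
  set m := max a (min c b) with hm
  have ham : a ≤ m := le_max_left _ _
  have hmb : m ≤ b := max_le hab (min_le_right _ _)
  have hmono : MonotoneOn f (Set.Icc a m) := by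
    apply monotoneOn_of_deriv_nonneg (convex_Icc a m)
      (hcont.mono (Set.Icc_subset_Icc le_rfl hmb))
    · intro x hx
      rw [interior_Icc] at hx
      exact (hd x ⟨hx.1, lt_of_lt_of_le hx.2 hmb⟩).differentiableAt.differentiableWithinAt
    · intro x hx
      rw [interior_Icc] at hx
      have hxb : x ∈ Set.Ioo a b := ⟨hx.1, lt_of_lt_of_le hx.2 hmb⟩
      have hxc : x < c := by
        rcases le_total a c with h | h
        · exact lt_of_lt_of_le hx.2 (max_le h (min_le_left _ _))
        · have hma : m = a := by rw [hm, min_eq_left (h.trans hab), max_eq_left h]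
          rw [hma] at hx; exact absurd (hx.1.trans hx.2) (lt_irrefl a)
      rw [(hd x hxb).deriv]
      exact hpos x hxb hxc
  have hanti : AntitoneOn f (Set.Icc m b) := by
    apply antitoneOn_of_deriv_nonpos (convex_Icc m b)
      (hcont.mono (Set.Icc_subset_Icc ham le_rfl))
    · intro x hx
      rw [interior_Icc] at hx
      exact (hd x ⟨lt_of_le_of_lt ham hx.1, hx.2⟩).differentiableAt.differentiableWithinAt
    · intro x hx
      rw [interior_Icc] at hx
      have hxb : x ∈ Set.Ioo a b := ⟨lt_of_le_of_lt ham hx.1, hx.2⟩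
      have hxc : c < x := by
        rcases le_total c b with h | h
        · exact lt_of_le_of_lt ((le_min le_rfl h).trans (le_max_right a _)) hx.1
        · have hmbb : m = b := by rw [hm, min_eq_right h, max_eq_right hab]
          rw [hmbb] at hx; exact absurd (hx.1.trans hx.2) (lt_irrefl b)
      rw [(hd x hxb).deriv]
      exact hneg x hxb hxc
  intro t ht
  rcases le_total t m with h | h
  · exact hmono ⟨ht.1, h⟩ ⟨ham, le_rfl⟩ h
  · exact hanti ⟨le_rfl, hmb⟩ ⟨h, ht.2⟩ h

lemma le_of_vshape {f f' : ℝ → ℝ} {a b c : ℝ} (hab : a ≤ b)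
    (hcont : ContinuousOn f (Set.Icc a b))
    (hd : ∀ x ∈ Set.Ioo a b, HasDerivAt f (f' x) x)
    (hneg : ∀ x ∈ Set.Ioo a b, x < c → f' x ≤ 0)
    (hpos : ∀ x ∈ Set.Ioo a b, c < x → 0 ≤ f' x) :
    ∀ t ∈ Set.Icc a b, f t ≤ max (f a) (f b) := by
  set m := max a (min c b) with hm
  have ham : a ≤ m := le_max_left _ _
  have hmb : m ≤ b := max_le hab (min_le_right _ _)
  have hanti : AntitoneOn f (Set.Icc a m) := by
    apply antitoneOn_of_deriv_nonpos (convex_Icc a m)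
      (hcont.mono (Set.Icc_subset_Icc le_rfl hmb))
    · intro x hx
      rw [interior_Icc] at hx
      exact (hd x ⟨hx.1, lt_of_lt_of_le hx.2 hmb⟩).differentiableAt.differentiableWithinAt
    · intro x hx
      rw [interior_Icc] at hx
      have hxb : x ∈ Set.Ioo a b := ⟨hx.1, lt_of_lt_of_le hx.2 hmb⟩
      have hxc : x < c := by
        rcases le_total a c with h | h
        · exact lt_of_lt_of_le hx.2 (max_le h (min_le_left _ _))
        · have hma : m = a := by rw [hm, min_eq_left (h.trans hab), max_eq_left h]
          rw [hma] at hx; exact absurd (hx.1.trans hx.2) (lt_irrefl a)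
      rw [(hd x hxb).deriv]
      exact hneg x hxb hxc
  have hmono : MonotoneOn f (Set.Icc m b) := by
    apply monotoneOn_of_deriv_nonneg (convex_Icc m b)
      (hcont.mono (Set.Icc_subset_Icc ham le_rfl))
    · intro x hx
      rw [interior_Icc] at hx
      exact (hd x ⟨lt_of_le_of_lt ham hx.1, hx.2⟩).differentiableAt.differentiableWithinAt
    · intro x hx
      rw [interior_Icc] at hx
      have hxb : x ∈ Set.Ioo a b := ⟨lt_of_le_of_lt ham hx.1, hx.2⟩
      have hxc : c < x := by
        rcases le_total c b with h | h
        · exact lt_of_le_of_lt ((le_min le_rfl h).trans (le_max_right a _)) hx.1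
        · have hmbb : m = b := by rw [hm, min_eq_right h, max_eq_right hab]
          rw [hmbb] at hx; exact absurd (hx.1.trans hx.2) (lt_irrefl b)
      rw [(hd x hxb).deriv]
      exact hpos x hxb hxc
  intro t ht
  rcases le_total t m with h | h
  · exact le_max_of_le_left (hanti ⟨le_rfl, ham⟩ ⟨ht.1, h⟩ ht.1)
  · exact le_max_of_le_right (hmono ⟨h, ht.2⟩ ⟨hmb, le_rfl⟩ ht.2)

lemma hasDerivAt_Alog (A α η x : ℝ) (hx : x * α + η ≠ 0) :
    HasDerivAt (fun u : ℝ => A * Real.log (u * α + η)) (A * (α / (x * α + η))) x := by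
  have h1 : HasDerivAt (fun u : ℝ => u * α + η) α x := by
    simpa using ((hasDerivAt_id x).mul_const α).add_const η
  have h2 := (Real.hasDerivAt_log hx).comp x h1
  have h3 := h2.const_mul A
  rw [div_eq_inv_mul]
  exact h3

lemma contOn_Alog {η : ℝ} (hη : 0 < η) (A α : ℝ) (hα : 0 < α) {a b : ℝ} (ha : 0 ≤ a) :
    ContinuousOn (fun u : ℝ => A * Real.log (u * α + η)) (Set.Icc a b) := by
  apply ContinuousOn.mul continuousOn_const
  apply ContinuousOn.log ((continuousOn_id.mul continuousOn_const).add continuousOn_const)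
  intro x hx
  have : 0 < x * α + η := by nlinarith [hx.1]
  exact ne_of_gt this

lemma pair_exists {η : ℝ} (hη : 0 < η) {A B α β : ℝ} (hα : 0 < α) (hβ : 0 < β) (hAB : A ≠ B)
    {a b : ℝ} (ha : 0 ≤ a) (hab : a ≤ b) :
    ∃ u ∈ Set.Icc a b,
      (u = a ∨ u = b ∨ u = η * (β * B - α * A) / (α * β * (A - B))) ∧
      ∀ t ∈ Set.Icc a b,
        A * Real.log (t * α + η) - B * Real.log (t * β + η) ≤
        A * Real.log (u * α + η) - B * Real.log (u * β + η) := by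
  set c := η * (β * B - α * A) / (α * β * (A - B)) with hcdef
  set f := fun u : ℝ => A * Real.log (u * α + η) - B * Real.log (u * β + η) with hf
  set f' := fun u : ℝ => A * (α / (u * α + η)) - B * (β / (u * β + η)) with hf'
  have hABsub : A - B ≠ 0 := sub_ne_zero.2 hAB
  have hcont : ContinuousOn f (Set.Icc a b) :=
    (contOn_Alog hη A α hα ha).sub (contOn_Alog hη B β hβ ha)
  have hden : ∀ x : ℝ, 0 ≤ x → 0 < x * α + η ∧ 0 < x * β + η := by
    intro x hx
    constructor <;> nlinarith
  have hd : ∀ x ∈ Set.Ioo a b, HasDerivAt f (f' x) x := by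
    intro x hx
    have hx0 : 0 ≤ x := ha.trans hx.1.le
    exact (hasDerivAt_Alog A α η x (ne_of_gt (hden x hx0).1)).sub
      (hasDerivAt_Alog B β η x (ne_of_gt (hden x hx0).2))
  have hceq : α * β * (A - B) * c = η * (β * B - α * A) := by
    rw [hcdef]; field_simp
  have key : ∀ x : ℝ, 0 ≤ x →
      f' x * ((x * α + η) * (x * β + η)) = α * β * (A - B) * (x - c) := by
    intro x hx
    have h1 := (hden x hx).1
    have h2 := (hden x hx).2
    rw [hf']
    field_simp
    nlinarith [hceq]
  rcases lt_or_gt_of_ne hAB with hlt | hgt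
  · -- A < B : unimodal, max at projection of c
    have hpos : ∀ x ∈ Set.Ioo a b, x < c → 0 ≤ f' x := by
      intro x hx hxc
      have hx0 : 0 ≤ x := ha.trans hx.1.le
      have h1 := (hden x hx0).1
      have h2 := (hden x hx0).2
      have hR : 0 < α * β * (A - B) * (x - c) := by
        have := mul_pos (mul_pos hα hβ)
          (mul_pos_of_neg_of_neg (show A - B < 0 by linarith) (show x - c < 0 by linarith))
        nlinarith [this]
      nlinarith [key x hx0, hR, mul_pos h1 h2]
    have hneg : ∀ x ∈ Set.Ioo a b, c < x → f' x ≤ 0 := by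
      intro x hx hxc
      have hx0 : 0 ≤ x := ha.trans hx.1.le
      have h1 := (hden x hx0).1
      have h2 := (hden x hx0).2
      have hR : α * β * (A - B) * (x - c) < 0 := by
        have := mul_pos (mul_pos (mul_pos hα hβ) (show 0 < B - A by linarith))
          (show 0 < x - c by linarith)
        nlinarith [this]
      nlinarith [key x hx0, hR, mul_pos h1 h2]
    refine ⟨max a (min c b), ⟨le_max_left _ _, max_le hab (min_le_right _ _)⟩,
      proj_cases hab, le_of_unimodal hab hcont hd hpos hneg⟩
  · -- A > B : v-shape, max at an endpoint
    have hneg : ∀ x ∈ Set.Ioo a b, x < c → f' x ≤ 0 := by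
      intro x hx hxc
      have hx0 : 0 ≤ x := ha.trans hx.1.le
      have h1 := (hden x hx0).1
      have h2 := (hden x hx0).2
      have hR : α * β * (A - B) * (x - c) < 0 := by
        have := mul_pos (mul_pos (mul_pos hα hβ) (show 0 < A - B by linarith))
          (show 0 < c - x by linarith)
        nlinarith [this]
      nlinarith [key x hx0, hR, mul_pos h1 h2]
    have hpos : ∀ x ∈ Set.Ioo a b, c < x → 0 ≤ f' x := by
      intro x hx hxc
      have hx0 : 0 ≤ x := ha.trans hx.1.le
      have h1 := (hden x hx0).1
      have h2 := (hden x hx0).2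
      have hR : 0 < α * β * (A - B) * (x - c) := by
        have := mul_pos (mul_pos (mul_pos hα hβ) (show 0 < A - B by linarith))
          (show 0 < x - c by linarith)
        nlinarith [this]
      nlinarith [key x hx0, hR, mul_pos h1 h2]
    have hmax := le_of_vshape hab hcont hd hneg hpos
    rcases le_total (f a) (f b) with h | h
    · exact ⟨b, ⟨hab, le_rfl⟩, Or.inr (Or.inl rfl),
        fun t ht => (hmax t ht).trans (max_le h le_rfl)⟩
    · exact ⟨a, ⟨le_rfl, hab⟩, Or.inl rfl,
        fun t ht => (hmax t ht).trans (max_le le_rfl h)⟩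

lemma last_exists {η : ℝ} (hη : 0 < η) {A α Z : ℝ} (hα : 0 < α) (hZ : 0 < Z)
    {a b : ℝ} (ha : 0 ≤ a) (hab : a ≤ b) :
    ∃ u ∈ Set.Icc a b,
      (u = a ∨ u = b ∨ u = A / Z - η / α) ∧
      ∀ t ∈ Set.Icc a b,
        A * Real.log (t * α + η) - Z * t ≤ A * Real.log (u * α + η) - Z * u := by
  set c := A / Z - η / α with hcdef
  set f := fun u : ℝ => A * Real.log (u * α + η) - Z * u with hf
  set f' := fun u : ℝ => A * (α / (u * α + η)) - Z with hf'
  have hcont : ContinuousOn f (Set.Icc a b) :=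
    (contOn_Alog hη A α hα ha).sub (continuousOn_const.mul continuousOn_id)
  have hden : ∀ x : ℝ, 0 ≤ x → 0 < x * α + η := by intro x hx; nlinarith
  have hd : ∀ x ∈ Set.Ioo a b, HasDerivAt f (f' x) x := by
    intro x hx
    have hx0 : 0 ≤ x := ha.trans hx.1.le
    exact (hasDerivAt_Alog A α η x (ne_of_gt (hden x hx0))).sub
      (by simpa using (hasDerivAt_id x).const_mul Z)
  have hceq : Z * α * c = A * α - Z * η := by
    rw [hcdef]; field_simp
  have key : ∀ x : ℝ, 0 ≤ x → f' x * (x * α + η) = Z * α * (c - x) := by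
    intro x hx
    have h1 := hden x hx
    rw [hf']
    field_simp
    nlinarith [hceq]
  have hpos : ∀ x ∈ Set.Ioo a b, x < c → 0 ≤ f' x := by
    intro x hx hxc
    have hx0 : 0 ≤ x := ha.trans hx.1.le
    have h1 := hden x hx0
    have hR : 0 < Z * α * (c - x) := mul_pos (mul_pos hZ hα) (by linarith)
    nlinarith [key x hx0, hR, h1]
  have hneg : ∀ x ∈ Set.Ioo a b, c < x → f' x ≤ 0 := by
    intro x hx hxc
    have hx0 : 0 ≤ x := ha.trans hx.1.le
    have h1 := hden x hx0
    have hR : Z * α * (c - x) < 0 := by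
      have := mul_pos (mul_pos hZ hα) (show 0 < x - c by linarith)
      nlinarith [this]
    nlinarith [key x hx0, hR, h1]
  exact ⟨max a (min c b), ⟨le_max_left _ _, max_le hab (min_le_right _ _)⟩,
    proj_cases hab, le_of_unimodal hab hcont hd hpos hneg⟩

noncomputable def Wt (K : ℕ) (g Q : Fin K → ℝ) (η Z : ℝ) (u : ℝ) (m : ℕ) : ℝ :=
  if h : m < K then Q ⟨m, h⟩ * Real.log (u * g ⟨m, h⟩ + η) else Z * u

noncomputable def Psi (K : ℕ) (g Q : Fin K → ℝ) (η Z : ℝ) (v : Fin K → ℝ) : ℝ :=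
  ∑ k : Fin K, (Wt K g Q η Z (v k) (k : ℕ) - Wt K g Q η Z (v k) ((k : ℕ) + 1))

lemma tele (f : ℕ → ℝ) (m n : ℕ) (h : m ≤ n) :
    ∑ k ∈ Finset.Icc m n, (f k - f (k + 1)) = f m - f (n + 1) := by
  induction n, h using Nat.le_induction with
  | base => simp
  | succ n hmn ih => rw [Finset.sum_Icc_succ_top (by omega), ih]; ring

lemma Sfun_zero (K : ℕ) (p : Fin K → ℝ) : Sfun K p 0 = 0 := by simp [Sfun]

lemma Sfun_succ (K : ℕ) (p : Fin K → ℝ) (m : ℕ) (h : m < K) :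
    Sfun K p (m + 1) = Sfun K p m + p ⟨m, h⟩ := by
  rw [Sfun, Sfun]
  have e : ∀ j : Fin K, (if (j : ℕ) < m + 1 then p j else 0)
      = (if (j : ℕ) < m then p j else 0) + (if j = ⟨m, h⟩ then p j else 0) := by
    intro j
    rcases lt_trichotomy (j : ℕ) m with h1 | h1 | h1
    · rw [if_pos (by omega), if_pos h1, if_neg (by simp [Fin.ext_iff]; omega)]; ring
    · rw [if_pos (by omega), if_neg (by omega), if_pos (by simp [Fin.ext_iff, h1])]; ring
    · rw [if_neg (by omega), if_neg (by omega), if_neg (by simp [Fin.ext_iff]; omega)]; ring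
  rw [Finset.sum_congr rfl (fun j _ => e j), Finset.sum_add_distrib]
  congr 1
  rw [Finset.sum_ite_eq' Finset.univ (⟨m, h⟩ : Fin K) p]
  simp

lemma Sfun_mono (K : ℕ) (p : Fin K → ℝ) (hp : ∀ k, 0 ≤ p k) {m m' : ℕ} (h : m ≤ m') :
    Sfun K p m ≤ Sfun K p m' := by
  apply Finset.sum_le_sum
  intro j _
  by_cases h1 : (j : ℕ) < m
  · rw [if_pos h1, if_pos (by omega)]
  · rw [if_neg h1]
    by_cases h2 : (j : ℕ) < m'
    · rw [if_pos h2]; exact hp j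
    · rw [if_neg h2]

lemma Sfun_nonneg (K : ℕ) (p : Fin K → ℝ) (hp : ∀ k, 0 ≤ p k) (m : ℕ) :
    0 ≤ Sfun K p m := by
  rw [← Sfun_zero K p]
  exact Sfun_mono K p hp (Nat.zero_le m)

lemma Sfun_K (K : ℕ) (p : Fin K → ℝ) : Sfun K p K = ∑ j : Fin K, p j :=
  Finset.sum_congr rfl (fun j _ => if_pos j.isLt)

lemma Gfun_eq_Fobj (K : ℕ) (g Q : Fin K → ℝ) (η Z : ℝ) (p : Fin K → ℝ) :
    Gfun K g Q η Z K p = Fobj K g Q η Z p := by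
  rw [Gfun, Fobj]
  have e : ∀ j : Fin K, (if (j : ℕ) < K then ff K g Q η Z j (Sfun K p (j : ℕ)) (p j) else 0)
      = Q j * Real.log (1 + p j * g j / (Sfun K p (j : ℕ) * g j + η)) - Z * p j := by
    intro j; rw [if_pos j.isLt]; rfl
  rw [Finset.sum_congr rfl (fun j _ => e j), Finset.sum_sub_distrib]
  congr 1
  rw [← Finset.mul_sum, Sfun_K]

lemma Fobj_eq_Psi (K : ℕ) (hK : 0 < K) (g Q : Fin K → ℝ) (η Z : ℝ)
    (hgpos : ∀ i, 0 < g i) (hη : 0 < η) (p : Fin K → ℝ) (hp : ∀ k, 0 ≤ p k) :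
    Fobj K g Q η Z p
      = Psi K g Q η Z (fun k => Sfun K p ((k : ℕ) + 1)) - Q ⟨0, hK⟩ * Real.log η := by
  set T : ℕ → ℝ := fun m =>
    if h : m < K then Q ⟨m, h⟩ * Real.log (Sfun K p m * g ⟨m, h⟩ + η) else Z * Sfun K p K
    with hT
  have hpos : ∀ (m : ℕ) (i : Fin K), 0 < Sfun K p m * g i + η := by
    intro m i
    have := Sfun_nonneg K p hp m
    nlinarith [hgpos i]
  have key : ∀ k : Fin K, Q k * Real.log (1 + p k * g k / (Sfun K p (k : ℕ) * g k + η))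
      = Q k * Real.log (Sfun K p ((k : ℕ) + 1) * g k + η)
        - Q k * Real.log (Sfun K p (k : ℕ) * g k + η) := by
    intro k
    have h1 := hpos (k : ℕ) k
    have h2 := hpos ((k : ℕ) + 1) k
    have e : 1 + p k * g k / (Sfun K p (k : ℕ) * g k + η)
        = (Sfun K p ((k : ℕ) + 1) * g k + η) / (Sfun K p (k : ℕ) * g k + η) := by
      rw [Sfun_succ K p (k : ℕ) k.isLt]
      rw [add_div' _ _ _ (ne_of_gt h1)]
      ring
    rw [e, Real.log_div (ne_of_gt h2) (ne_of_gt h1), mul_sub]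
  -- T-facts
  have hTk : ∀ k : Fin K, Q k * Real.log (Sfun K p (k : ℕ) * g k + η) = T (k : ℕ) := by
    intro k; simp only [hT, dif_pos k.isLt, Fin.eta]
  have hTk1 : ∀ k : Fin K, Wt K g Q η Z (Sfun K p ((k : ℕ) + 1)) ((k : ℕ) + 1) = T ((k : ℕ) + 1) := by
    intro k
    simp only [hT, Wt]
    by_cases h : (k : ℕ) + 1 < K
    · rw [dif_pos h, dif_pos h]
    · rw [dif_neg h, dif_neg h]
      have hkK : (k : ℕ) + 1 = K := by have := k.isLt; omega
      rw [hkK]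
  have hWk : ∀ k : Fin K, Wt K g Q η Z (Sfun K p ((k : ℕ) + 1)) (k : ℕ)
      = Q k * Real.log (Sfun K p ((k : ℕ) + 1) * g k + η) := by
    intro k; rw [Wt]; simp only [dif_pos k.isLt, Fin.eta]
  have htele : ∑ k : Fin K, (T (k : ℕ) - T ((k : ℕ) + 1)) = T 0 - T K := by
    rw [Fin.sum_univ_eq_sum_range (fun m => T m - T (m + 1)) K]
    exact Finset.sum_range_sub' T K
  have hT0 : T 0 = Q ⟨0, hK⟩ * Real.log η := by
    simp only [hT, dif_pos hK, Sfun_zero]; norm_num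
  have hTK : T K = Z * Sfun K p K := by simp only [hT, dif_neg (lt_irrefl K)]
  rw [Fobj, Psi]
  rw [Finset.sum_congr rfl (fun k _ => key k)]
  have e2 : ∀ k : Fin K,
      (Wt K g Q η Z (Sfun K p ((k : ℕ) + 1)) (k : ℕ)
        - Wt K g Q η Z (Sfun K p ((k : ℕ) + 1)) ((k : ℕ) + 1))
      = Q k * Real.log (Sfun K p ((k : ℕ) + 1) * g k + η) - T ((k : ℕ) + 1) := by
    intro k; rw [hWk k, hTk1 k]
  rw [Finset.sum_congr rfl (fun k _ => e2 k)]
  have e3 : ∀ k : Fin K,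
      (Q k * Real.log (Sfun K p ((k : ℕ) + 1) * g k + η)
        - Q k * Real.log (Sfun K p (k : ℕ) * g k + η))
      = (Q k * Real.log (Sfun K p ((k : ℕ) + 1) * g k + η) - T ((k : ℕ) + 1))
        + (T ((k : ℕ) + 1) - T (k : ℕ)) := by
    intro k; rw [← hTk k]; ring
  rw [Finset.sum_congr rfl (fun k _ => e3 k), Finset.sum_add_distrib]
  have e4 : ∑ k : Fin K, (T ((k : ℕ) + 1) - T (k : ℕ)) = T K - T 0 := by
    have : ∀ k : Fin K, (T ((k : ℕ) + 1) - T (k : ℕ)) = -(T (k : ℕ) - T ((k : ℕ) + 1)) := by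
      intro k; ring
    rw [Finset.sum_congr rfl (fun k _ => this k), Finset.sum_neg_distrib, htele]
    ring
  rw [e4, hT0, hTK]
  ring

lemma crux (K : ℕ) (g Q : Fin K → ℝ) (η Z Pmax : ℝ)
    (hgpos : ∀ i, 0 < g i)
    (hQdist : ∀ i j : Fin K, i ≠ j → Q i ≠ Q j) (hη : 0 < η) (hZ : 0 < Z) (hP : 0 < Pmax)
    {L : ℕ} (π : Fin L → ℝ)
    (hπrange : Set.range π = Ecand K g Q η Z Pmax ∩ Set.Icc (0:ℝ) Pmax) :
    ∀ (n : ℕ) (v : Fin K → ℝ), Monotone v → (∀ k, v k ∈ Set.Icc (0:ℝ) Pmax) →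
      (Finset.image v Finset.univ \ Finset.image π Finset.univ).card ≤ n →
      ∃ v' : Fin K → ℝ, Monotone v' ∧ (∀ k, v' k ∈ Set.range π) ∧
        Psi K g Q η Z v ≤ Psi K g Q η Z v' := by
  have h0π : (0:ℝ) ∈ Set.range π := by
    rw [hπrange]
    exact ⟨Or.inl (Or.inl (Set.mem_insert _ _)), le_rfl, hP.le⟩
  have hPπ : Pmax ∈ Set.range π := by
    rw [hπrange]
    exact ⟨Or.inl (Or.inl (Set.mem_insert_of_mem _ rfl)), hP.le, le_rfl⟩
  have hdone : ∀ v : Fin K → ℝ, Monotone v →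
      Finset.image v Finset.univ \ Finset.image π Finset.univ = ∅ →
      ∃ v' : Fin K → ℝ, Monotone v' ∧ (∀ k, v' k ∈ Set.range π) ∧
        Psi K g Q η Z v ≤ Psi K g Q η Z v' := by
    intro v hmono hemp
    refine ⟨v, hmono, fun k => ?_, le_rfl⟩
    have hmem : v k ∈ Finset.image π Finset.univ := by
      by_contra h
      have : v k ∈ Finset.image v Finset.univ \ Finset.image π Finset.univ :=
        Finset.mem_sdiff.2 ⟨Finset.mem_image_of_mem v (Finset.mem_univ k), h⟩
      rw [hemp] at this
      exact absurd this (Finset.notMem_empty _)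
    obtain ⟨l, -, hl⟩ := Finset.mem_image.1 hmem
    exact ⟨l, hl⟩
  intro n
  induction n with
  | zero =>
    intro v hmono hbound hcard
    exact hdone v hmono (Finset.card_eq_zero.1 (Nat.le_zero.1 hcard))
  | succ n ih =>
    intro v hmono hbound hcard
    by_cases hemp : Finset.image v Finset.univ \ Finset.image π Finset.univ = ∅
    · exact hdone v hmono hemp
    obtain ⟨t, ht⟩ := Finset.nonempty_iff_ne_empty.2 hemp
    have htv : t ∈ Finset.image v Finset.univ := (Finset.mem_sdiff.1 ht).1
    have htT : t ∉ Finset.image π Finset.univ := (Finset.mem_sdiff.1 ht).2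
    have htπ : t ∉ Set.range π := by
      rintro ⟨l, hl⟩
      exact htT (Finset.mem_image.2 ⟨l, Finset.mem_univ l, hl⟩)
    obtain ⟨k₀, -, hk₀⟩ := Finset.mem_image.1 htv
    set B : Finset (Fin K) := Finset.univ.filter (fun k => v k = t) with hB
    have hBne : B.Nonempty := ⟨k₀, Finset.mem_filter.2 ⟨Finset.mem_univ _, hk₀⟩⟩
    set i := B.min' hBne with hi
    set j := B.max' hBne with hj
    have hiB : i ∈ B := B.min'_mem hBne
    have hjB : j ∈ B := B.max'_mem hBne
    have hvi : v i = t := (Finset.mem_filter.1 hiB).2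
    have hvj : v j = t := (Finset.mem_filter.1 hjB).2
    have hij : i ≤ j := B.min'_le j hjB
    have hsq : ∀ k, i ≤ k → k ≤ j → v k = t := fun k h1 h2 =>
      le_antisymm (hvj ▸ hmono h2) (hvi ▸ hmono h1)
    have hBIcc : B = Finset.Icc i j := by
      ext k
      rw [Finset.mem_Icc]
      constructor
      · intro h; exact ⟨B.min'_le k h, B.le_max' k h⟩
      · rintro ⟨h1, h2⟩; exact Finset.mem_filter.2 ⟨Finset.mem_univ _, hsq k h1 h2⟩
    have hilt : (i : ℕ) < K := i.isLt
    set a : ℝ := if h : (i : ℕ) = 0 then 0 else v ⟨(i : ℕ) - 1, by omega⟩ with ha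
    set b : ℝ := if h : (j : ℕ) + 1 < K then v ⟨(j : ℕ) + 1, h⟩ else Pmax with hb
    have ht0 : 0 ≤ t := by rw [← hvi]; exact (hbound i).1
    have htP : t ≤ Pmax := by rw [← hvi]; exact (hbound i).2
    have hat : a < t := by
      rw [ha]
      by_cases h : (i : ℕ) = 0
      · rw [dif_pos h]
        exact lt_of_le_of_ne ht0 (fun h0 => htπ (h0 ▸ h0π))
      · rw [dif_neg h]
        have hi'i : (⟨(i : ℕ) - 1, by omega⟩ : Fin K) < i := by
          rw [Fin.lt_def]; simp; omega
        have h1 : v ⟨(i : ℕ) - 1, by omega⟩ ≤ t := le_of_le_of_eq (hmono hi'i.le) hvi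
        refine lt_of_le_of_ne h1 (fun h2 => ?_)
        have hmem : (⟨(i : ℕ) - 1, by omega⟩ : Fin K) ∈ B :=
          Finset.mem_filter.2 ⟨Finset.mem_univ _, h2⟩
        exact absurd (B.min'_le _ hmem) (not_le.2 hi'i)
    have htb : t < b := by
      rw [hb]
      by_cases h : (j : ℕ) + 1 < K
      · rw [dif_pos h]
        have hjj' : j < (⟨(j : ℕ) + 1, h⟩ : Fin K) := by
          rw [Fin.lt_def]; simp
        have h1 : t ≤ v ⟨(j : ℕ) + 1, h⟩ := hvj ▸ hmono hjj'.le
        refine lt_of_le_of_ne h1 (fun h2 => ?_)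
        have hmem : (⟨(j : ℕ) + 1, h⟩ : Fin K) ∈ B :=
          Finset.mem_filter.2 ⟨Finset.mem_univ _, h2.symm⟩
        exact absurd (B.le_max' _ hmem) (not_le.2 hjj')
      · rw [dif_neg h]
        exact lt_of_le_of_ne htP (fun h0 => htπ (h0 ▸ hPπ))
    have ha0 : 0 ≤ a := by
      rw [ha]
      by_cases h : (i : ℕ) = 0
      · rw [dif_pos h]
      · rw [dif_neg h]; exact (hbound _).1
    have hbP : b ≤ Pmax := by
      rw [hb]
      by_cases h : (j : ℕ) + 1 < K
      · rw [dif_pos h]; exact (hbound _).2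
      · rw [dif_neg h]
    have hab : a ≤ b := le_trans hat.le htb.le
    have halow : ∀ k, v k < t → v k ≤ a := by
      intro k hk
      have hki : (k : ℕ) < (i : ℕ) := by
        by_contra h
        have hle : i ≤ k := by rw [Fin.le_def]; omega
        exact absurd (hvi ▸ hmono hle) (not_le.2 hk)
      have hi0 : ¬ (i : ℕ) = 0 := by omega
      rw [ha, dif_neg hi0]
      exact hmono (by rw [Fin.le_def]; simp; omega)
    have hbhigh : ∀ k, t < v k → b ≤ v k := by
      intro k hk
      have hjk : (j : ℕ) < (k : ℕ) := by
        by_contra h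
        have hle : k ≤ j := by rw [Fin.le_def]; omega
        exact absurd hk (not_lt.2 (hvj ▸ hmono hle))
      have hjK' : (j : ℕ) + 1 < K := by have := k.isLt; omega
      rw [hb, dif_pos hjK']
      exact hmono (by rw [Fin.le_def]; simp; omega)
    have hψ : ∀ u : ℝ, ∑ k ∈ B, (Wt K g Q η Z u (k : ℕ) - Wt K g Q η Z u ((k : ℕ) + 1))
        = Wt K g Q η Z u (i : ℕ) - Wt K g Q η Z u ((j : ℕ) + 1) := by
      intro u
      have h1 : ∑ k ∈ Finset.Icc i j, (Wt K g Q η Z u (k : ℕ) - Wt K g Q η Z u ((k : ℕ) + 1))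
          = ∑ m ∈ Finset.Icc (i : ℕ) (j : ℕ), (Wt K g Q η Z u m - Wt K g Q η Z u (m + 1)) := by
        rw [← Fin.map_valEmbedding_Icc, Finset.sum_map]
        rfl
      rw [hBIcc, h1]
      exact tele _ _ _ (Fin.le_def.1 hij)
    obtain ⟨u, huab, hukind, humax⟩ :
        ∃ u ∈ Set.Icc a b, (u = a ∨ u = b ∨ u ∈ Set.range π) ∧
          ∀ s ∈ Set.Icc a b,
            Wt K g Q η Z s (i : ℕ) - Wt K g Q η Z s ((j : ℕ) + 1)
              ≤ Wt K g Q η Z u (i : ℕ) - Wt K g Q η Z u ((j : ℕ) + 1) := by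
      by_cases hjK : (j : ℕ) + 1 < K
      · have hQne : Q i ≠ Q ⟨(j : ℕ) + 1, hjK⟩ := by
          apply hQdist
          have := Fin.le_def.1 hij
          exact Fin.ne_of_val_ne (by simp; omega)
        obtain ⟨u, h1, h2, h3⟩ := pair_exists hη (hgpos i) (hgpos ⟨(j : ℕ) + 1, hjK⟩) hQne ha0 hab
        refine ⟨u, h1, ?_, ?_⟩
        · rcases h2 with h | h | h
          · exact Or.inl h
          · exact Or.inr (Or.inl h)
          · refine Or.inr (Or.inr ?_)
            rw [hπrange]
            refine ⟨Or.inl (Or.inr ⟨i, ⟨(j : ℕ) + 1, hjK⟩, ?_, h⟩),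
              le_trans ha0 h1.1, le_trans h1.2 hbP⟩
            rw [Fin.lt_def]
            have := Fin.le_def.1 hij
            simp
            omega
        · intro s hs
          have := h3 s hs
          simp only [Wt, dif_pos hilt, dif_pos hjK, Fin.eta]
          exact this
      · obtain ⟨u, h1, h2, h3⟩ := last_exists hη (hgpos i) hZ ha0 hab (A := Q i)
        refine ⟨u, h1, ?_, ?_⟩
        · rcases h2 with h | h | h
          · exact Or.inl h
          · exact Or.inr (Or.inl h)
          · refine Or.inr (Or.inr ?_)
            rw [hπrange]
            exact ⟨Or.inr ⟨i, h⟩, le_trans ha0 h1.1, le_trans h1.2 hbP⟩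
        · intro s hs
          simp only [Wt, dif_pos hilt, dif_neg hjK, Fin.eta]
          exact h3 s hs
    have htmem : t ∈ Set.Icc a b := ⟨hat.le, htb.le⟩
    set v' : Fin K → ℝ := fun k => if v k = t then u else v k with hv'
    have hu0 : 0 ≤ u := le_trans ha0 huab.1
    have huP : u ≤ Pmax := le_trans huab.2 hbP
    have hv'mono : Monotone v' := by
      intro k k' hkk'
      show (if v k = t then u else v k) ≤ (if v k' = t then u else v k')
      by_cases h1 : v k = t
      · rw [if_pos h1]
        by_cases h2 : v k' = t
        · rw [if_pos h2]
        · rw [if_neg h2]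
          have hlt : t < v k' := lt_of_le_of_ne (h1 ▸ hmono hkk') (Ne.symm h2)
          exact le_trans huab.2 (hbhigh k' hlt)
      · rw [if_neg h1]
        by_cases h2 : v k' = t
        · rw [if_pos h2]
          have hlt : v k < t := lt_of_le_of_ne (h2 ▸ hmono hkk') h1
          exact le_trans (halow k hlt) huab.1
        · rw [if_neg h2]
          exact hmono hkk'
    have hv'bound : ∀ k, v' k ∈ Set.Icc (0:ℝ) Pmax := by
      intro k
      show (if v k = t then u else v k) ∈ _
      split_ifs with h
      · exact ⟨hu0, huP⟩
      · exact hbound k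
    have hPsiLe : Psi K g Q η Z v ≤ Psi K g Q η Z v' := by
      have hsplit : ∀ w : Fin K → ℝ, Psi K g Q η Z w
          = (∑ k ∈ B, (Wt K g Q η Z (w k) (k : ℕ) - Wt K g Q η Z (w k) ((k : ℕ) + 1)))
            + ∑ k ∈ Finset.univ.filter (fun k => ¬ v k = t),
                (Wt K g Q η Z (w k) (k : ℕ) - Wt K g Q η Z (w k) ((k : ℕ) + 1)) := by
        intro w
        rw [Psi, hB]
        exact (Finset.sum_filter_add_sum_filter_not Finset.univ (fun k => v k = t) _).symm
      rw [hsplit v, hsplit v']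
      have e1 : ∑ k ∈ B, (Wt K g Q η Z (v' k) (k : ℕ) - Wt K g Q η Z (v' k) ((k : ℕ) + 1))
          = Wt K g Q η Z u (i : ℕ) - Wt K g Q η Z u ((j : ℕ) + 1) := by
        rw [← hψ u]
        apply Finset.sum_congr rfl
        intro k hk
        have hkt : v k = t := (Finset.mem_filter.1 hk).2
        have : v' k = u := by show (if v k = t then u else v k) = u; rw [if_pos hkt]
        rw [this]
      have e2 : ∑ k ∈ B, (Wt K g Q η Z (v k) (k : ℕ) - Wt K g Q η Z (v k) ((k : ℕ) + 1))
          = Wt K g Q η Z t (i : ℕ) - Wt K g Q η Z t ((j : ℕ) + 1) := by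
        rw [← hψ t]
        apply Finset.sum_congr rfl
        intro k hk
        rw [(Finset.mem_filter.1 hk).2]
      have e3 : ∑ k ∈ Finset.univ.filter (fun k => ¬ v k = t),
            (Wt K g Q η Z (v' k) (k : ℕ) - Wt K g Q η Z (v' k) ((k : ℕ) + 1))
          = ∑ k ∈ Finset.univ.filter (fun k => ¬ v k = t),
            (Wt K g Q η Z (v k) (k : ℕ) - Wt K g Q η Z (v k) ((k : ℕ) + 1)) := by
        apply Finset.sum_congr rfl
        intro k hk
        have hkt : ¬ v k = t := (Finset.mem_filter.1 hk).2
        have : v' k = v k := by show (if v k = t then u else v k) = v k; rw [if_neg hkt]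
        rw [this]
      rw [e1, e2, e3]
      exact add_le_add_left (humax t htmem) _
    have hcard' : (Finset.image v' Finset.univ \ Finset.image π Finset.univ).card ≤ n := by
      have huwit : u ∈ Finset.image π Finset.univ ∨ (∃ k', v k' = u) := by
        rcases hukind with h | h | h
        · by_cases h0 : (i : ℕ) = 0
          · left
            have ha0' : a = 0 := by rw [ha, dif_pos h0]
            obtain ⟨l, hl⟩ := h0π
            rw [h, ha0']
            exact Finset.mem_image.2 ⟨l, Finset.mem_univ l, hl⟩
          · right
            refine ⟨⟨(i : ℕ) - 1, by omega⟩, ?_⟩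
            rw [h, ha, dif_neg h0]
        · by_cases hjK : (j : ℕ) + 1 < K
          · right
            refine ⟨⟨(j : ℕ) + 1, hjK⟩, ?_⟩
            rw [h, hb, dif_pos hjK]
          · left
            have hbP' : b = Pmax := by rw [hb, dif_neg hjK]
            obtain ⟨l, hl⟩ := hPπ
            rw [h, hbP']
            exact Finset.mem_image.2 ⟨l, Finset.mem_univ l, hl⟩
        · left
          obtain ⟨l, hl⟩ := h
          exact Finset.mem_image.2 ⟨l, Finset.mem_univ l, hl⟩
      have hunt : u ≠ t := by
        rcases hukind with h | h | h
        · rw [h]; exact ne_of_lt hat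
        · rw [h]; exact ne_of_gt htb
        · intro he; exact htπ (he ▸ h)
      have hsub : Finset.image v' Finset.univ \ Finset.image π Finset.univ
          ⊆ (Finset.image v Finset.univ \ Finset.image π Finset.univ).erase t := by
        intro x hx
        obtain ⟨hx1, hx2⟩ := Finset.mem_sdiff.1 hx
        obtain ⟨k, -, hk⟩ := Finset.mem_image.1 hx1
        rw [Finset.mem_erase, Finset.mem_sdiff]
        by_cases hvk : v k = t
        · have hxu : x = u := by
            rw [← hk]; show (if v k = t then u else v k) = u; rw [if_pos hvk]
          rcases huwit with h | ⟨k', hk'⟩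
          · exact absurd (hxu ▸ h) hx2
          · refine ⟨?_, Finset.mem_image.2 ⟨k', Finset.mem_univ _, hk'.trans hxu.symm⟩, hx2⟩
            rw [hxu]
            exact hunt
        · have hxv : x = v k := by
            rw [← hk]; show (if v k = t then u else v k) = v k; rw [if_neg hvk]
          exact ⟨by rw [hxv]; exact hvk, Finset.mem_image.2 ⟨k, Finset.mem_univ _, hxv.symm⟩, hx2⟩
      have hone : 1 ≤ (Finset.image v Finset.univ \ Finset.image π Finset.univ).card :=
        Finset.card_pos.2 ⟨t, ht⟩
      calc (Finset.image v' Finset.univ \ Finset.image π Finset.univ).card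
          ≤ ((Finset.image v Finset.univ \ Finset.image π Finset.univ).erase t).card :=
            Finset.card_le_card hsub
        _ = (Finset.image v Finset.univ \ Finset.image π Finset.univ).card - 1 :=
            Finset.card_erase_of_mem ht
        _ ≤ n := by omega
    obtain ⟨v'', hm'', hr'', hp''⟩ := ih v' hv'mono hv'bound hcard'
    exact ⟨v'', hm'', hr'', le_trans hPsiLe hp''⟩

end DPPA

open DPPA

/-- **Correctness of the dynamic-programming based power allocation.** With
`π_1 < ⋯ < π_L` listing `Ẽ = E ∩ [0, P_max]` and `H(l, K)` the maximum of subproblem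
SP-`l`-`K`, the objective `F` attains its maximum over `D`, and
`max_{p ∈ D} F(p) = max_{1 ≤ l ≤ L} H(l, K)`. -/
theorem dppa_correctness
    (K : ℕ) (hK : 1 ≤ K) (g Q : Fin K → ℝ) (η Z Pmax : ℝ)
    (hg : ∀ i j : Fin K, i ≤ j → g j ≤ g i) (hgpos : ∀ i, 0 < g i)
    (hQpos : ∀ i, 0 < Q i) (hQdist : ∀ i j : Fin K, i ≠ j → Q i ≠ Q j)
    (hη : 0 < η) (hZ : 0 < Z) (hP : 0 < Pmax)
    (L : ℕ) (π : Fin L → ℝ) (hπ : StrictMono π)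
    (hπrange : Set.range π = Ecand K g Q η Z Pmax ∩ Set.Icc (0 : ℝ) Pmax)
    (H : Fin L → ℝ)
    (hH : ∀ l : Fin L,
      IsGreatest {y | ∃ p : Fin K → ℝ,
        ((∀ j : Fin K, 0 ≤ p j) ∧ Sfun K p K = π l ∧
          (∀ k' : ℕ, 1 ≤ k' → k' ≤ K → Sfun K p k' ∈ Set.range π)) ∧
        y = Gfun K g Q η Z K p} (H l)) :
    ∃ M : ℝ, IsGreatest (Fobj K g Q η Z '' Dfeas K Pmax) M ∧
      IsGreatest (Set.range H) M := by
  classical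
  have hK0 : 0 < K := hK
  have h0π : (0:ℝ) ∈ Set.range π := by
    rw [hπrange]; exact ⟨Or.inl (Or.inl (Set.mem_insert _ _)), le_rfl, hP.le⟩
  have hL : 0 < L := by
    obtain ⟨l, -⟩ := h0π
    exact l.pos
  obtain ⟨l₀, -, hl₀⟩ := Finset.exists_max_image Finset.univ H ⟨⟨0, hL⟩, Finset.mem_univ _⟩
  refine ⟨H l₀, ⟨?_, ?_⟩, ⟨l₀, rfl⟩, ?_⟩
  · -- membership in the image
    obtain ⟨p₀, ⟨hp₀nn, hp₀sum, -⟩, hp₀val⟩ := (hH l₀).1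
    have hπl₀ : π l₀ ∈ Set.Icc (0:ℝ) Pmax := by
      have hmem : π l₀ ∈ Set.range π := ⟨l₀, rfl⟩
      rw [hπrange] at hmem; exact hmem.2
    refine ⟨p₀, ⟨hp₀nn, ?_⟩, ?_⟩
    · rw [hp₀sum]; exact hπl₀.2
    · rw [← Gfun_eq_Fobj]; exact hp₀val.symm
  · -- upper bound on the image
    rintro y ⟨p, ⟨hpnn, hpP⟩, rfl⟩
    set v : Fin K → ℝ := fun k => Sfun K p ((k : ℕ) + 1) with hv
    have hvmono : Monotone v := fun k k' h =>
      Sfun_mono K p hpnn (Nat.succ_le_succ (Fin.le_def.1 h))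
    have hvbound : ∀ k, v k ∈ Set.Icc (0:ℝ) Pmax := by
      intro k
      exact ⟨Sfun_nonneg K p hpnn _, le_trans (Sfun_mono K p hpnn k.isLt) hpP⟩
    obtain ⟨v', hv'mono, hv'ran, hPsi⟩ :=
      crux K g Q η Z Pmax hgpos hQdist hη hZ hP π hπrange
        (Finset.image v Finset.univ \ Finset.image π Finset.univ).card v hvmono hvbound le_rfl
    have hv'0 : ∀ k, (0:ℝ) ≤ v' k := by
      intro k
      have hmem := hv'ran k
      rw [hπrange] at hmem
      exact hmem.2.1
    set p' : Fin K → ℝ :=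
      fun k => v' k - (if h : (k : ℕ) = 0 then 0 else v' ⟨(k : ℕ) - 1, by omega⟩) with hp'
    have hp'nn : ∀ k, 0 ≤ p' k := by
      intro k
      show 0 ≤ v' k - _
      by_cases h : (k : ℕ) = 0
      · rw [dif_pos h, sub_zero]; exact hv'0 k
      · rw [dif_neg h]
        have hle : (⟨(k : ℕ) - 1, by omega⟩ : Fin K) ≤ k := by
          rw [Fin.le_def]; simp
        exact sub_nonneg.2 (hv'mono hle)
    have hSf : ∀ (m : ℕ) (h : m < K), Sfun K p' (m + 1) = v' ⟨m, h⟩ := by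
      intro m
      induction m with
      | zero =>
        intro h
        rw [Sfun_succ K p' 0 h, Sfun_zero, zero_add]
        show v' ⟨0, h⟩ - _ = v' ⟨0, h⟩
        rw [dif_pos rfl, sub_zero]
      | succ m ihm =>
        intro h
        have hm : m < K := by omega
        rw [Sfun_succ K p' (m + 1) h, ihm hm]
        show v' ⟨m, hm⟩ + (v' ⟨m + 1, h⟩ - _) = v' ⟨m + 1, h⟩
        rw [dif_neg (by simp : ¬ (((⟨m + 1, h⟩ : Fin K) : ℕ) = 0))]
        have he : (⟨((⟨m + 1, h⟩ : Fin K) : ℕ) - 1, by omega⟩ : Fin K) = ⟨m, hm⟩ := by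
          simp [Fin.ext_iff]
        rw [he]
        ring
    have hKm : K - 1 < K := by omega
    have hSK : Sfun K p' K = v' ⟨K - 1, hKm⟩ := by
      have h1 := hSf (K - 1) hKm
      rwa [show K - 1 + 1 = K by omega] at h1
    obtain ⟨l, hl⟩ := hv'ran ⟨K - 1, hKm⟩
    have hGle : Gfun K g Q η Z K p' ≤ H l := by
      apply (hH l).2
      refine ⟨p', ⟨hp'nn, by rw [hSK, ← hl], fun k' h1 h2 => ?_⟩, rfl⟩
      have hk' : k' - 1 < K := by omega
      have h3 : Sfun K p' k' = v' ⟨k' - 1, hk'⟩ := by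
        have h4 := hSf (k' - 1) hk'
        rwa [show k' - 1 + 1 = k' by omega] at h4
      rw [h3]; exact hv'ran _
    have hFp : Fobj K g Q η Z p = Psi K g Q η Z v - Q ⟨0, hK0⟩ * Real.log η :=
      Fobj_eq_Psi K hK0 g Q η Z hgpos hη p hpnn
    have hFp' : Fobj K g Q η Z p' = Psi K g Q η Z v' - Q ⟨0, hK0⟩ * Real.log η := by
      rw [Fobj_eq_Psi K hK0 g Q η Z hgpos hη p' hp'nn]
      congr 2
      funext k
      exact hSf (k : ℕ) k.isLt
    have hchain : Fobj K g Q η Z p ≤ Fobj K g Q η Z p' := by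
      rw [hFp, hFp']
      linarith
    calc Fobj K g Q η Z p ≤ Fobj K g Q η Z p' := hchain
      _ = Gfun K g Q η Z K p' := (Gfun_eq_Fobj K g Q η Z p').symm
      _ ≤ H l := hGle
      _ ≤ H l₀ := hl₀ l (Finset.mem_univ l)
  · -- upper bound on range H
    rintro y ⟨l, rfl⟩
    exact hl₀ l (Finset.mem_univ l)
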